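/- Fix x ∈ ℝ and c > 0, and set σ_n² = n^{−c}. Let E_1, E_2 be i.i.d. exponential random variables with mean one. Then there exists a positive constant K = K(x) such that for all n ≥ 2, P((E_1 E_2)^{1/4} > (1 + σ_n²)^{−1/2} (c_n x + d_n)) ≤ K/n, where c_n = (8 log n)^{−1/2} and d_n = (log n)^{1/2}/√2 · (1 + (1/4)(log log n)/(log n)) + (1/(2(8 log n)^{1/2})) · log(π/2). -/

import Mathlib

open MeasureTheory ProbabilityTheory Real Set Filter
open scoped ENNReal Topology

lemma gammaPDF_one_one (y : ℝ) (hy : 0 ≤ y) :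
    gammaPDF 1 1 y = ENNReal.ofReal (Real.exp (-y)) := by
  rw [gammaPDF_of_nonneg hy]
  norm_num [Real.Gamma_one, Real.rpow_natCast]

lemma expMeasure_apply (S : Set ℝ) (hS : MeasurableSet S) :
    expMeasure 1 S = ∫⁻ y in S, gammaPDF 1 1 y := by
  rw [expMeasure, gammaMeasure, withDensity_apply _ hS]

lemma expTail {a : ℝ} (ha : 0 ≤ a) :
    expMeasure 1 (Set.Ioi a) = ENNReal.ofReal (Real.exp (-a)) := by
  rw [expMeasure_apply _ measurableSet_Ioi]
  rw [setLIntegral_congr_fun measurableSet_Ioi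
    (fun ⦃y⦄ (hy : y ∈ Set.Ioi a) => gammaPDF_one_one y (le_of_lt (ha.trans_lt hy)))]
  rw [← ofReal_integral_eq_lintegral_ofReal]
  · rw [integral_exp_neg_Ioi]
  · exact (exp_neg_integrableOn_Ioi a one_pos).congr_fun (fun y _ => by norm_num) measurableSet_Ioi
  · exact Filter.Eventually.of_forall (fun y => (Real.exp_pos _).le)

lemma expNeg : expMeasure 1 (Set.Iio 0) = 0 := by
  rw [expMeasure_apply _ measurableSet_Iio]
  exact lintegral_gammaPDF_of_nonpos le_rfl

lemma lint_exp_Ioi (a : ℝ) :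
    ∫⁻ y in Set.Ioi a, ENNReal.ofReal (Real.exp (-y)) = ENNReal.ofReal (Real.exp (-a)) := by
  rw [← ofReal_integral_eq_lintegral_ofReal]
  · rw [integral_exp_neg_Ioi]
  · exact (exp_neg_integrableOn_Ioi a one_pos).congr_fun (fun y _ => by norm_num) measurableSet_Ioi
  · exact Filter.Eventually.of_forall (fun y => (Real.exp_pos _).le)

set_option maxHeartbeats 1000000 in
lemma prodTail {t : ℝ} (ht : 1 ≤ t) :
    ((expMeasure 1).prod (expMeasure 1)) {p : ℝ × ℝ | t^4 < p.1 * p.2}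
      ≤ ENNReal.ofReal ((2 * Real.sqrt π * t + 1) * Real.exp (-(2*t^2))) := by
  have ht0 : (0:ℝ) < t := lt_of_lt_of_le one_pos ht
  have ht4 : (0:ℝ) < t^4 := by positivity
  have ht2 : (0:ℝ) < t^2 := by positivity
  have hSm : MeasurableSet {p : ℝ × ℝ | t^4 < p.1 * p.2} :=
    measurableSet_lt measurable_const (measurable_fst.mul measurable_snd)
  set f : ℝ → ℝ≥0∞ := fun y => if 0 < y then ENNReal.ofReal (Real.exp (-(t^4/y))) else 0 with hf
  have hfm : Measurable f := by
    apply Measurable.ite (measurableSet_lt measurable_const measurable_id)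
    · exact (Real.measurable_exp.comp ((measurable_const.div measurable_id).neg)).ennreal_ofReal
    · exact measurable_const
  haveI : IsProbabilityMeasure (expMeasure 1) := isProbabilityMeasure_expMeasure one_pos
  rw [Measure.prod_apply hSm]
  have hsec : ∀ y : ℝ, expMeasure 1 (Prod.mk y ⁻¹' {p : ℝ × ℝ | t^4 < p.1 * p.2}) = f y := by
    intro y
    have : Prod.mk y ⁻¹' {p : ℝ × ℝ | t^4 < p.1 * p.2} = {z : ℝ | t^4 < y * z} := rfl
    rw [this]
    show (expMeasure 1) {z : ℝ | t^4 < y * z}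
      = if 0 < y then ENNReal.ofReal (Real.exp (-(t^4/y))) else 0
    by_cases hy : 0 < y
    · rw [if_pos hy]
      have : {z : ℝ | t^4 < y * z} = Set.Ioi (t^4 / y) := by
        ext z; simp [Set.mem_Ioi, div_lt_iff₀ hy, mul_comm]
      rw [this, expTail (by positivity)]
    · rw [if_neg hy]
      refine measure_mono_null ?_ expNeg
      intro z hz
      simp only [Set.mem_setOf_eq] at hz
      simp only [Set.mem_Iio]
      by_contra h
      push_neg at h
      nlinarith [ht4]
  rw [lintegral_congr hsec]
  have hwd : expMeasure 1 = volume.withDensity (gammaPDF 1 1) := rfl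
  have hpdfm : Measurable (gammaPDF 1 1) := (measurable_gammaPDFReal 1 1).ennreal_ofReal
  rw [hwd, lintegral_withDensity_eq_lintegral_mul _ hpdfm hfm]
  have hzero : ∀ y : ℝ, y ∉ Set.Ioi (0:ℝ) → (gammaPDF 1 1 * f) y = 0 := by
    intro y hy
    simp only [Set.mem_Ioi, not_lt] at hy
    simp [hf, Pi.mul_apply, if_neg (not_lt.mpr hy)]
  have hind : (gammaPDF 1 1 * f) = (Set.Ioi (0:ℝ)).indicator (gammaPDF 1 1 * f) := by
    ext y
    by_cases hy : y ∈ Set.Ioi (0:ℝ)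
    · rw [Set.indicator_of_mem hy]
    · rw [Set.indicator_of_notMem hy, hzero y hy]
  rw [hind, lintegral_indicator measurableSet_Ioi]
  have hsplit : Set.Ioi (0:ℝ) = Set.Ioc 0 (4*t^2) ∪ Set.Ioi (4*t^2) :=
    (Set.Ioc_union_Ioi_eq_Ioi (by positivity)).symm
  rw [hsplit, lintegral_union measurableSet_Ioi Set.Ioc_disjoint_Ioi_same]
  have hpdf : ∀ y : ℝ, 0 < y → (gammaPDF 1 1 * f) y = ENNReal.ofReal (Real.exp (-(t^4/y) + -y)) := by
    intro y hy
    simp only [Pi.mul_apply, hf, if_pos hy, gammaPDF_one_one y hy.le]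
    rw [← ENNReal.ofReal_mul (Real.exp_pos _).le, ← Real.exp_add, add_comm]
  -- first piece
  have h1 : ∫⁻ y in Set.Ioc 0 (4*t^2), (gammaPDF 1 1 * f) y
      ≤ ENNReal.ofReal (Real.exp (-(2*t^2)) * (2 * Real.sqrt π * t)) := by
    have hb : (0:ℝ) < 1/(4*t^2) := by positivity
    have hmono : ∀ y ∈ Set.Ioc (0:ℝ) (4*t^2), (gammaPDF 1 1 * f) y
        ≤ ENNReal.ofReal (Real.exp (-(2*t^2)) * Real.exp (-(1/(4*t^2)) * (y - t^2)^2)) := by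
      intro y hy
      obtain ⟨hy0, hy4⟩ := hy
      rw [hpdf y hy0]
      apply ENNReal.ofReal_le_ofReal
      rw [← Real.exp_add]
      apply Real.exp_le_exp.mpr
      have e1 : t^4/y + y - 2*t^2 = (y - t^2)^2 / y := by field_simp; ring
      have e2 : (y - t^2)^2 / (4*t^2) ≤ (y - t^2)^2 / y := by gcongr
      have e3 : (1/(4*t^2)) * (y - t^2)^2 = (y - t^2)^2 / (4*t^2) := by ring
      linarith
    calc ∫⁻ y in Set.Ioc 0 (4*t^2), (gammaPDF 1 1 * f) y
        ≤ ∫⁻ y in Set.Ioc 0 (4*t^2),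
            ENNReal.ofReal (Real.exp (-(2*t^2)) * Real.exp (-(1/(4*t^2)) * (y - t^2)^2)) :=
          setLIntegral_mono (Measurable.ennreal_ofReal (by fun_prop)) hmono
      _ ≤ ∫⁻ y, ENNReal.ofReal (Real.exp (-(2*t^2)) * Real.exp (-(1/(4*t^2)) * (y - t^2)^2)) :=
          setLIntegral_le_lintegral _ _
      _ = ENNReal.ofReal (Real.exp (-(2*t^2)) * (2 * Real.sqrt π * t)) := by
          rw [← ofReal_integral_eq_lintegral_ofReal]
          · congr 1
            rw [integral_const_mul]
            have := integral_sub_right_eq_self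
              (fun y : ℝ => Real.exp (-(1/(4*t^2)) * y^2)) (t^2) (μ := volume)
            rw [this, integral_gaussian]
            rw [show π / (1/(4*t^2)) = (2 * Real.sqrt π * t)^2 by
              have hp : Real.sqrt π ^ 2 = π := Real.sq_sqrt pi_pos.le
              field_simp
              nlinarith [hp]]
            rw [Real.sqrt_sq (by positivity)]
          · exact (Integrable.comp_sub_right (integrable_exp_neg_mul_sq hb) (t^2)).const_mul _
          · exact Filter.Eventually.of_forall (fun y => by positivity)
  -- second piece
  have h2 : ∫⁻ y in Set.Ioi (4*t^2), (gammaPDF 1 1 * f) y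
      ≤ ENNReal.ofReal (Real.exp (-(4*t^2))) := by
    have hmono : ∀ y ∈ Set.Ioi (4*t^2), (gammaPDF 1 1 * f) y ≤ ENNReal.ofReal (Real.exp (-y)) := by
      intro y hy
      have hy0 : 0 < y := lt_trans (by positivity) hy
      rw [hpdf y hy0]
      apply ENNReal.ofReal_le_ofReal
      apply Real.exp_le_exp.mpr
      have : 0 ≤ t^4 / y := by positivity
      linarith
    calc ∫⁻ y in Set.Ioi (4*t^2), (gammaPDF 1 1 * f) y
        ≤ ∫⁻ y in Set.Ioi (4*t^2), ENNReal.ofReal (Real.exp (-y)) :=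
          setLIntegral_mono (Measurable.ennreal_ofReal (by fun_prop)) hmono
      _ = ENNReal.ofReal (Real.exp (-(4*t^2))) := lint_exp_Ioi _
  refine le_trans (add_le_add h1 h2) ?_
  rw [← ENNReal.ofReal_add (by positivity) (by positivity)]
  apply ENNReal.ofReal_le_ofReal
  have : Real.exp (-(4*t^2)) ≤ Real.exp (-(2*t^2)) :=
    Real.exp_le_exp.mpr (by nlinarith)
  nlinarith [Real.exp_pos (-(2*t^2)), Real.sqrt_nonneg π]

/-- The Gumbel scaling constant `c_n = (8 log n)^{−1/2}`. -/
noncomputable def cGum (n : ℕ) : ℝ := (Real.sqrt (8 * Real.log n))⁻¹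

/-- The Gumbel centering constant
`d_n = (log n)^{1/2}/√2 · (1 + (1/4)(log log n)/(log n)) + (2(8 log n)^{1/2})⁻¹ log(π/2)`. -/
noncomputable def dGum (n : ℕ) : ℝ :=
  Real.sqrt (Real.log n) / Real.sqrt 2 *
      (1 + (1 / 4) * Real.log (Real.log n) / Real.log n) +
    (1 / (2 * Real.sqrt (8 * Real.log n))) * Real.log (Real.pi / 2)

noncomputable def tA (x c : ℝ) (n : ℕ) : ℝ :=
  (1 + (n:ℝ) ^ (-c))⁻¹ ^ ((1:ℝ)/2) * (cGum n * x + dGum n)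

set_option maxHeartbeats 2000000 in
lemma tA_bounds (x c : ℝ) (hc : 0 < c) :
    ∀ᶠ n : ℕ in Filter.atTop, 1 ≤ tA x c n ∧ tA x c n ≤ Real.sqrt (Real.log n) ∧
      Real.log n + Real.log (Real.log n) / 2 - 2*(|x|+1) ≤ 2 * (tA x c n)^2 := by
  have hL : Tendsto (fun n : ℕ => Real.log n) atTop atTop :=
    Real.tendsto_log_atTop.comp tendsto_natCast_atTop_atTop
  have hpow : Tendsto (fun n : ℕ => (n:ℝ) ^ (-(c/2))) atTop (𝓝 0) :=
    (tendsto_rpow_neg_atTop (by positivity)).comp tendsto_natCast_atTop_atTop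
  filter_upwards [hL.eventually_ge_atTop 400, hL.eventually_ge_atTop (x^2),
    hpow.eventually_lt_const (show (0:ℝ) < c/2 by positivity),
    eventually_ge_atTop 1] with n h400 hx2 hpow' hn1
  set L := Real.log n with hLdef
  set LL := Real.log L with hLLdef
  set SL := Real.sqrt L with hSLdef
  set s8 := Real.sqrt (8*L) with hs8def
  set σ := (n:ℝ) ^ (-c) with hσdef
  set q := SL / Real.sqrt 2 with hqdef
  set a := (1/4) * LL / L with hadef
  set z := s8⁻¹ * |x| with hzdef
  set u := cGum n * x + dGum n with hudef
  set w := (1 + σ)⁻¹ ^ ((1:ℝ)/2) with hwdef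
  have htdef : tA x c n = w * u := rfl
  have hn0 : (0:ℝ) < n := by exact_mod_cast hn1
  have hL0 : (0:ℝ) < L := by linarith
  have hσ0 : 0 ≤ σ := Real.rpow_nonneg hn0.le _
  have hσ1 : σ ≤ 1 := Real.rpow_le_one_of_one_le_of_nonpos (by exact_mod_cast hn1)
    (neg_nonpos.mpr hc.le)
  have hσL : σ * L ≤ 1 := by
    have hlog_le : L ≤ (n:ℝ)^(c/2) / (c/2) := Real.log_le_rpow_div hn0.le (by positivity)
    have hsplit : σ * (n:ℝ)^(c/2) = (n:ℝ)^(-(c/2)) := by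
      rw [hσdef, ← Real.rpow_add hn0]; ring_nf
    have h1 : σ * L ≤ σ * ((n:ℝ)^(c/2) / (c/2)) := mul_le_mul_of_nonneg_left hlog_le hσ0
    have h2 : σ * ((n:ℝ)^(c/2) / (c/2)) = (n:ℝ)^(-(c/2)) / (c/2) := by
      rw [mul_div_assoc', hsplit]
    have h3 : (n:ℝ)^(-(c/2)) / (c/2) ≤ 1 := by
      rw [div_le_one (by positivity)]; exact hpow'.le
    linarith
  have f1 : SL^2 = L := Real.sq_sqrt hL0.le
  have f2 : 20 ≤ SL := by
    have h := Real.sqrt_le_sqrt h400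
    rwa [show Real.sqrt 400 = 20 by
      rw [show (400:ℝ) = 20^2 by norm_num, Real.sqrt_sq (by norm_num)]] at h
  have hSL0 : 0 < SL := by linarith
  have f3 : s8^2 = 8*L := Real.sq_sqrt (by linarith)
  have f4 : 0 < s8 := Real.sqrt_pos.mpr (by linarith)
  have f6 : Real.sqrt 2 ^ 2 = 2 := Real.sq_sqrt (by norm_num)
  have f7 : 0 < Real.sqrt 2 := Real.sqrt_pos.mpr (by norm_num)
  have h141 : (1.41:ℝ) ≤ Real.sqrt 2 := by nlinarith only [f6, f7]
  have h15 : Real.sqrt 2 ≤ (1.5:ℝ) := by nlinarith only [f6, f7]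
  have f5 : Real.sqrt 2 * s8 = 4 * SL := by
    have e1 : Real.sqrt 2 * s8 = Real.sqrt (2*(8*L)) := (Real.sqrt_mul (by norm_num) _).symm
    have e2 : Real.sqrt (16*L) = Real.sqrt 16 * SL := Real.sqrt_mul (by norm_num) _
    rw [e1, show (2:ℝ)*(8*L) = 16*L by ring, e2,
      show Real.sqrt 16 = 4 by rw [show (16:ℝ) = 4^2 by norm_num, Real.sqrt_sq (by norm_num)]]
  have hs8ge : 2*SL ≤ s8 := by nlinarith only [f1, f3, hSL0, f4]
  have f8 : 0 ≤ LL := Real.log_nonneg (by linarith)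
  have f9 : LL ≤ L := le_trans (Real.log_le_sub_one_of_pos hL0) (by linarith)
  have f10 : 0 ≤ Real.log (π/2) := Real.log_nonneg (by linarith [Real.pi_gt_three])
  have f11 : Real.log (π/2) ≤ 1 := le_trans
    (Real.log_le_sub_one_of_pos (by positivity)) (by linarith [Real.pi_le_four])
  have fx : |x| ≤ SL := by
    have h := Real.sqrt_le_sqrt hx2
    rwa [Real.sqrt_sq_eq_abs] at h
  have hq2 : q^2 = L/2 := by rw [hqdef, div_pow, f6, f1]
  have hqSL : q * Real.sqrt 2 = SL := div_mul_cancel₀ _ (ne_of_gt f7)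
  have hq0 : 0 ≤ q := by positivity
  have hq13 : 13 ≤ q := by nlinarith only [hqSL, f2, h15, hq0]
  have ha0 : 0 ≤ a := by positivity
  have ha14 : a ≤ 1/4 := by
    rw [hadef, div_le_iff₀ hL0]
    linarith
  have hz0 : 0 ≤ z := by positivity
  have hz12 : z ≤ 1/2 := by
    have h1 : z ≤ s8⁻¹ * SL := mul_le_mul_of_nonneg_left fx (by positivity)
    have h2 : s8⁻¹ * SL ≤ 1/2 := by
      rw [inv_mul_le_iff₀ f4]
      linarith only [hs8ge]
    linarith
  have hqs8 : q * s8⁻¹ = 1/4 := by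
    rw [hqdef]
    rw [div_mul_eq_mul_div, div_eq_iff (ne_of_gt f7)]
    rw [mul_comm SL s8⁻¹, inv_mul_eq_div, div_mul_eq_mul_div, div_eq_iff (ne_of_gt f4)]
    linarith only [f5]
  have hcg : cGum n = s8⁻¹ := by rw [cGum]
  have hdg : dGum n = q * (1 + a) + (1/(2*s8)) * Real.log (π/2) := by
    rw [dGum, hqdef, hadef]
  have hLa : L * a = LL/4 := by
    rw [hadef, mul_div_assoc']
    rw [div_eq_iff (ne_of_gt hL0)]
    ring
  have hσpos : (0:ℝ) < 1 + σ := by linarith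
  have hinv0 : 0 ≤ (1+σ)⁻¹ := by positivity
  have hw0 : 0 ≤ w := Real.rpow_nonneg hinv0 _
  have hw2 : w^2 = (1+σ)⁻¹ := by
    rw [hwdef, ← Real.rpow_natCast ((1+σ)⁻¹ ^ ((1:ℝ)/2)) 2, ← Real.rpow_mul hinv0]
    norm_num
  have hw1 : w ≤ 1 := Real.rpow_le_one hinv0 (inv_le_one_of_one_le₀ (by linarith)) (by norm_num)
  have hinvlow : 1 - σ ≤ (1+σ)⁻¹ := by
    rw [inv_eq_one_div, le_div_iff₀ hσpos]
    nlinarith only [hσ0, hσ1]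
  have ht2 : (tA x c n)^2 = (1+σ)⁻¹ * u^2 := by rw [htdef, mul_pow, hw2]
  have hxlow : -(s8⁻¹ * |x|) ≤ s8⁻¹ * x := by
    have := mul_le_mul_of_nonneg_left (neg_abs_le x) (le_of_lt (inv_pos.mpr f4))
    linarith
  have hxup : s8⁻¹ * x ≤ s8⁻¹ * |x| :=
    mul_le_mul_of_nonneg_left (le_abs_self x) (by positivity)
  clear_value w u z a q σ s8 SL LL L
  -- now pure arithmetic
  have hu_low : q * (1 + a) - z ≤ u := by
    have hpos : 0 ≤ (1/(2*s8)) * Real.log (π/2) := by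
      apply mul_nonneg _ f10
      positivity
    rw [hudef, hcg, hdg]
    rw [hzdef]
    linarith only [hxlow, hpos]
  have hu_up : u ≤ SL := by
    have h1 : (1/(2*s8)) * Real.log (π/2) ≤ 1/2 := by
      have h0 : (0:ℝ) ≤ 1/(2*s8) := by positivity
      have hhalf : 1/(2*s8) ≤ 1/2 := by
        rw [div_le_div_iff₀ (by positivity) (by norm_num)]
        nlinarith only [hs8ge, hSL0, f2]
      nlinarith only [h0, hhalf, f10, f11]
    rw [hudef, hcg, hdg]
    nlinarith only [hxup, hzdef, hz12, h1, hqSL, ha14, h141, hq13, hq0, ha0]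
  have hu6 : 6 ≤ u := by nlinarith only [hu_low, hz12, hq13, ha0, hq0]
  have hu2L : u^2 ≤ L := by nlinarith only [hu_up, hu6, f1]
  have hu2_low : L/2 + LL/4 - |x| ≤ u^2 := by
    have habs : 0 ≤ |x| := abs_nonneg x
    have hqzval : q * z = |x|/4 := by
      rw [hzdef, ← mul_assoc, hqs8]
      ring
    have hq2a : q^2 * a = LL/8 := by
      rw [hq2, div_mul_eq_mul_div, hLa]
      ring
    have hqza : q * z * a ≤ |x|/16 := by
      rw [hqzval]
      nlinarith only [ha0, ha14, habs]
    have hv0 : 0 ≤ q*(1+a) - z := by nlinarith only [hq13, ha0, hz12, hq0]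
    have hsq : (q*(1+a) - z)^2 ≤ u^2 := by nlinarith only [hu_low, hv0]
    have hexp : L/2 + LL/4 - |x| ≤ (q*(1+a) - z)^2 := by
      nlinarith only [hq2, hq2a, hqzval, hqza, sq_nonneg (q*a), hz0, habs, sq_nonneg z]
    linarith only [hsq, hexp]
  have hσu2 : σ * u^2 ≤ 1 := by
    have h1 : σ * u^2 ≤ σ * L := mul_le_mul_of_nonneg_left hu2L hσ0
    linarith
  have ht2low : L/2 + LL/4 - |x| - 1 ≤ (tA x c n)^2 := by
    rw [ht2]
    have h1 : (1-σ) * u^2 ≤ (1+σ)⁻¹ * u^2 :=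
      mul_le_mul_of_nonneg_right hinvlow (sq_nonneg u)
    nlinarith only [h1, hσu2, hu2_low]
  have ht0 : 0 ≤ tA x c n := by
    rw [htdef]
    exact mul_nonneg hw0 (by linarith only [hu6])
  refine ⟨?_, ?_, ?_⟩
  · nlinarith only [ht0, ht2low, f1, f2, fx, f8]
  · rw [htdef]
    calc w * u ≤ 1 * u := mul_le_mul_of_nonneg_right hw1 (by linarith only [hu6])
      _ = u := one_mul u
      _ ≤ SL := hu_up
  · linarith only [ht2low, fx, f8]

set_option maxHeartbeats 1000000 in
/-- For fixed `x ∈ ℝ`, `c > 0` and `σ_n² = n^{−c}`, there is a constant `K = K(x) > 0`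
with `P((E₁E₂)^{1/4} > (1 + σ_n²)^{−1/2}(c_n x + d_n)) ≤ K/n` for all `n ≥ 2`,
where `E₁, E₂` are i.i.d. mean-one exponentials. -/
theorem stmt19 (x : ℝ) (c : ℝ) (hc : 0 < c) :
    ∃ K : ℝ, 0 < K ∧ ∀ n : ℕ, 2 ≤ n →
      (((expMeasure 1).prod (expMeasure 1))
          {p : ℝ × ℝ | (1 + (n : ℝ) ^ (-c))⁻¹ ^ ((1 : ℝ) / 2) * (cGum n * x + dGum n)
              < (p.1 * p.2) ^ ((1 : ℝ) / 4)}).toReal ≤ K / n := by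
  haveI : IsProbabilityMeasure (expMeasure 1) := isProbabilityMeasure_expMeasure one_pos
  obtain ⟨N, hN⟩ := Filter.eventually_atTop.mp (tA_bounds x c hc)
  set B : ℝ := |x| + 1 with hB
  set K0 : ℝ := (2*Real.sqrt π + 1) * Real.exp (2*B) with hK0
  have hK0pos : 0 < K0 := by positivity
  refine ⟨K0 + N + 1, by positivity, ?_⟩
  intro n hn2
  have hnpos : (0:ℝ) < n := by
    have : (0:ℕ) < n := by omega
    exact_mod_cast this
  set μ2 := (expMeasure 1).prod (expMeasure 1) with hμ2
  have hset : {p : ℝ × ℝ | (1 + (n : ℝ) ^ (-c))⁻¹ ^ ((1 : ℝ) / 2) * (cGum n * x + dGum n)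
      < (p.1 * p.2) ^ ((1 : ℝ) / 4)}
      = {p : ℝ × ℝ | tA x c n < (p.1 * p.2) ^ ((1 : ℝ) / 4)} := rfl
  rw [hset]
  by_cases hcase : N ≤ n
  · obtain ⟨ht1, htSL, ht2⟩ := hN n hcase
    set t := tA x c n with htdef
    have ht0 : 0 ≤ t := le_trans zero_le_one ht1
    -- set inclusion up to null sets
    have hsub : {p : ℝ × ℝ | t < (p.1 * p.2) ^ ((1 : ℝ) / 4)}
        ⊆ {p : ℝ × ℝ | t^4 < p.1 * p.2} ∪ {p : ℝ × ℝ | p.1 < 0} ∪ {p : ℝ × ℝ | p.2 < 0} := by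
      intro p hp
      simp only [Set.mem_setOf_eq] at hp
      by_cases h1 : 0 ≤ p.1
      · by_cases h2 : 0 ≤ p.2
        · left; left
          have h0 : 0 ≤ p.1 * p.2 := mul_nonneg h1 h2
          have hrw : ((p.1*p.2) ^ ((1:ℝ)/4))^(4:ℕ) = p.1*p.2 := by
            rw [← Real.rpow_natCast ((p.1*p.2) ^ ((1:ℝ)/4)) 4, ← Real.rpow_mul h0]
            norm_num
          have := pow_lt_pow_left₀ hp ht0 (n := 4) (by norm_num)
          rw [hrw] at this
          exact this
        · right; exact lt_of_not_ge h2
      · left; right; exact lt_of_not_ge h1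
    have hbad1 : μ2 {p : ℝ × ℝ | p.1 < 0} = 0 := by
      have : {p : ℝ × ℝ | p.1 < 0} = (Set.Iio (0:ℝ)) ×ˢ (Set.univ : Set ℝ) := by
        ext p; simp
      rw [hμ2, this, Measure.prod_prod, expNeg, zero_mul]
    have hbad2 : μ2 {p : ℝ × ℝ | p.2 < 0} = 0 := by
      have : {p : ℝ × ℝ | p.2 < 0} = (Set.univ : Set ℝ) ×ˢ (Set.Iio (0:ℝ)) := by
        ext p; simp
      rw [hμ2, this, Measure.prod_prod, expNeg, mul_zero]
    have hμle : μ2 {p : ℝ × ℝ | t < (p.1 * p.2) ^ ((1 : ℝ) / 4)}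
        ≤ ENNReal.ofReal ((2 * Real.sqrt π * t + 1) * Real.exp (-(2*t^2))) := by
      calc μ2 {p : ℝ × ℝ | t < (p.1 * p.2) ^ ((1 : ℝ) / 4)}
          ≤ μ2 ({p : ℝ × ℝ | t^4 < p.1 * p.2} ∪ {p : ℝ × ℝ | p.1 < 0}
              ∪ {p : ℝ × ℝ | p.2 < 0}) := measure_mono hsub
        _ ≤ μ2 ({p : ℝ × ℝ | t^4 < p.1 * p.2} ∪ {p : ℝ × ℝ | p.1 < 0})
              + μ2 {p : ℝ × ℝ | p.2 < 0} := measure_union_le _ _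
        _ ≤ μ2 {p : ℝ × ℝ | t^4 < p.1 * p.2} + μ2 {p : ℝ × ℝ | p.1 < 0}
              + μ2 {p : ℝ × ℝ | p.2 < 0} := by
            gcongr
            exact measure_union_le _ _
        _ = μ2 {p : ℝ × ℝ | t^4 < p.1 * p.2} := by rw [hbad1, hbad2, add_zero, add_zero]
        _ ≤ ENNReal.ofReal ((2 * Real.sqrt π * t + 1) * Real.exp (-(2*t^2))) := prodTail ht1
    -- real-number bound
    set L := Real.log n with hL
    have hSL1 : 1 ≤ Real.sqrt L := le_trans ht1 htSL
    have hL0 : 0 < L := by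
      by_contra h
      push_neg at h
      rw [Real.sqrt_eq_zero_of_nonpos h] at hSL1
      linarith
    have hSL0 : 0 < Real.sqrt L := by linarith
    have hexpbound : Real.exp (-(2*t^2))
        ≤ Real.exp (2*B) * ((n:ℝ)⁻¹ * (Real.sqrt L)⁻¹) := by
      have h1 : -(2*t^2) ≤ 2*B - L - Real.log L / 2 := by linarith [ht2]
      have h2 : Real.exp (2*B - L - Real.log L / 2)
          = Real.exp (2*B) * ((n:ℝ)⁻¹ * (Real.sqrt L)⁻¹) := by
        rw [show 2*B - L - Real.log L / 2 = 2*B + (-L + -(Real.log L / 2)) by ring,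
          Real.exp_add, Real.exp_add]
        congr 1
        congr 1
        · rw [Real.exp_neg, Real.exp_log hnpos]
        · rw [show Real.log L / 2 = Real.log (Real.sqrt L) by rw [Real.log_sqrt hL0.le],
            Real.exp_neg, Real.exp_log hSL0]
      rw [← h2]
      exact Real.exp_le_exp.mpr h1
    have hmain : (2 * Real.sqrt π * t + 1) * Real.exp (-(2*t^2)) ≤ K0 / n := by
      have hπ : 0 ≤ Real.sqrt π := Real.sqrt_nonneg π
      calc (2 * Real.sqrt π * t + 1) * Real.exp (-(2*t^2))
          ≤ ((2*Real.sqrt π + 1) * t) * Real.exp (-(2*t^2)) := by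
            apply mul_le_mul_of_nonneg_right _ (Real.exp_pos _).le
            nlinarith only [ht1, hπ]
        _ ≤ ((2*Real.sqrt π + 1) * Real.sqrt L)
              * (Real.exp (2*B) * ((n:ℝ)⁻¹ * (Real.sqrt L)⁻¹)) := by
            apply mul_le_mul
            · apply mul_le_mul_of_nonneg_left htSL (by positivity)
            · exact hexpbound
            · exact (Real.exp_pos _).le
            · positivity
        _ = K0 / n := by
            rw [hK0]
            field_simp
    have hK0K : K0 / n ≤ (K0 + N + 1) / n := by
      gcongr
      linarith [Nat.cast_nonneg (α := ℝ) N]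
    exact le_trans (ENNReal.toReal_le_of_le_ofReal (by positivity)
      (le_trans hμle (ENNReal.ofReal_le_ofReal hmain))) hK0K
  · have hμ1 : μ2 {p : ℝ × ℝ | tA x c n < (p.1*p.2)^((1:ℝ)/4)} ≤ 1 := prob_le_one
    have htoReal : (μ2 {p : ℝ × ℝ | tA x c n < (p.1*p.2)^((1:ℝ)/4)}).toReal ≤ 1 :=
      ENNReal.toReal_le_of_le_ofReal zero_le_one (by simpa [ENNReal.ofReal_one] using hμ1)
    refine le_trans htoReal ?_
    rw [le_div_iff₀ hnpos]
    have hnN : (n:ℝ) ≤ N := by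
      have : n ≤ N := le_of_lt (lt_of_not_ge hcase)
      exact_mod_cast this
    linarith only [hK0pos, hnN]
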